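/- Let C ∈ ℝ and let x ∈ A_C be a point at which ∇p₁(x), ∇p₂(x), ∇p₃(x) are linearly independent. Then ∇p₄(x) = (4x₁³,…,4x₅³) lies in the linear span of ∇p₁(x), ∇p₂(x), ∇p₃(x) if and only if the coordinates x₁,…,x₅ take at most three distinct values. -/

import Mathlib

noncomputable section

/-- Power sum `p_k(x) = x₁^k + ⋯ + x₅^k` on `ℝ⁵`. -/
def p (k : ℕ) (x : Fin 5 → ℝ) : ℝ := ∑ i, x i ^ k

/-- The surface `A_C = {x ∈ ℝ⁵ : p₁(x) = 0, p₂(x) = 1, p₃(x) = C}`. -/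
def A (C : ℝ) : Set (Fin 5 → ℝ) := {x | p 1 x = 0 ∧ p 2 x = 1 ∧ p 3 x = C}

/-- The gradient of `p_k`: `∇p_k(x) = (k x₁^{k-1}, …, k x₅^{k-1})`. -/
def grad (k : ℕ) (x : Fin 5 → ℝ) : Fin 5 → ℝ := fun i => (k : ℝ) * x i ^ (k - 1)

/-- The set of coordinate permutations of a point `x₀ ∈ ℝ⁵`. -/
def perms (x₀ : Fin 5 → ℝ) : Set (Fin 5 → ℝ) := {x | ∃ σ : Equiv.Perm (Fin 5), x = x₀ ∘ σ}

/-- A finite set of reals with at most three elements is covered by a triple. -/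
lemma cover_three {s : Set ℝ} (hfin : s.Finite) (h : s.ncard ≤ 3) :
    ∃ a b c : ℝ, s ⊆ ({a, b, c} : Set ℝ) := by
  classical
  have hlen : hfin.toFinset.toList.length ≤ 3 := by
    rw [Finset.length_toList, ← Set.ncard_eq_toFinset_card s hfin]
    exact h
  have hmem : ∀ y ∈ s, y ∈ hfin.toFinset.toList := by
    intro y hy
    simpa using hy
  generalize hL : hfin.toFinset.toList = l at hlen hmem
  match l, hlen, hmem with
  | [], _, hmem => exact ⟨0, 0, 0, fun y hy => absurd (hmem y hy) (by simp)⟩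
  | [a], _, hmem =>
    refine ⟨a, a, a, fun y hy => ?_⟩
    have := hmem y hy; simp at this; simp [this]
  | [a, b], _, hmem =>
    refine ⟨a, b, b, fun y hy => ?_⟩
    have := hmem y hy; simp at this; rcases this with h | h <;> simp [h]
  | [a, b, c], _, hmem =>
    refine ⟨a, b, c, fun y hy => ?_⟩
    have := hmem y hy; simp at this; rcases this with h | h | h <;> simp [h]
  | a :: b :: c :: d :: t, hlen, _ => simp at hlen; omega

/-- for `x ∈ A_C` at which `∇p₁(x), ∇p₂(x), ∇p₃(x)` are linearly independent,
`∇p₄(x)` lies in their span iff the coordinates of `x` take at most three distinct values. -/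
theorem stmt_8 (C : ℝ) (x : Fin 5 → ℝ) (hx : x ∈ A C)
    (hli : LinearIndependent ℝ ![grad 1 x, grad 2 x, grad 3 x]) :
    grad 4 x ∈ Submodule.span ℝ ({grad 1 x, grad 2 x, grad 3 x} : Set (Fin 5 → ℝ)) ↔
      (Set.range x).ncard ≤ 3 := by
  classical
  constructor
  · intro h
    rw [Submodule.mem_span_insert] at h
    obtain ⟨a, z, hz, h4⟩ := h
    rw [Submodule.mem_span_insert] at hz
    obtain ⟨b, w, hw, hz⟩ := hz
    rw [Submodule.mem_span_singleton] at hw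
    obtain ⟨c, hw⟩ := hw
    subst hw hz
    have key : ∀ i, 4 * x i ^ 3 = a * 1 + b * (2 * x i) + c * (3 * x i ^ 2) := by
      intro i
      have := congrFun h4 i
      simp [grad] at this
      linarith [this]
    -- all coordinates are roots of a nonzero cubic
    set q : Polynomial ℝ :=
      Polynomial.C 4 * Polynomial.X ^ 3 - Polynomial.C (3 * c) * Polynomial.X ^ 2
        - Polynomial.C (2 * b) * Polynomial.X - Polynomial.C a with hq
    have hq0 : q ≠ 0 := by
      intro hzero
      have : q.coeff 3 = 0 := by rw [hzero]; simp
      simp [hq, Polynomial.coeff_X_pow, Polynomial.coeff_C_mul, mul_assoc] at this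
    have hqdeg : q.natDegree ≤ 3 := by
      unfold q
      compute_degree
    have hroot : ∀ i, Polynomial.IsRoot q (x i) := by
      intro i
      have := key i
      simp [hq, Polynomial.IsRoot]
      nlinarith [key i]
    have hsub : Set.range x ⊆ ↑q.roots.toFinset := by
      rintro y ⟨i, rfl⟩
      simp [Multiset.mem_toFinset, Polynomial.mem_roots hq0]
      exact hroot i
    calc (Set.range x).ncard ≤ (q.roots.toFinset : Set ℝ).ncard :=
          Set.ncard_le_ncard hsub (q.roots.toFinset : Finset ℝ).finite_toSet
      _ = q.roots.toFinset.card := Set.ncard_coe_finset _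
      _ ≤ Multiset.card q.roots := Multiset.toFinset_card_le _
      _ ≤ q.natDegree := q.card_roots'
      _ ≤ 3 := hqdeg
  · intro h
    obtain ⟨v₁, v₂, v₃, hcov⟩ := cover_three (Set.finite_range x) h
    have key : ∀ i, (x i - v₁) * (x i - v₂) * (x i - v₃) = 0 := by
      intro i
      have := hcov ⟨i, rfl⟩
      simp at this
      rcases this with h | h | h <;> rw [h] <;> ring
    have heq : grad 4 x = (4 * (v₁ * v₂ * v₃)) • grad 1 x
        + (-2 * (v₁ * v₂ + v₁ * v₃ + v₂ * v₃)) • grad 2 x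
        + (4 / 3 * (v₁ + v₂ + v₃)) • grad 3 x := by
      funext i
      simp [grad]
      linear_combination 4 * key i
    rw [heq]
    refine Submodule.add_mem _ (Submodule.add_mem _ ?_ ?_) ?_ <;>
      exact Submodule.smul_mem _ _ (Submodule.subset_span (by simp))
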